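/- Let G = (V, E) be a finite directed graph with no self-loops, let Q ∈ ℕ, and let F_v : ℝ → ℝ (v ∈ V) and G_{uv} : ℝ → ℝ ((u,v) ∈ E) be convex functions, with J(x) = Σ_{v∈V} F_v(x_v) + Σ_{(u,v)∈E} G_{uv}(x_u − x_v) for x ∈ ℤ^V. Suppose x ∈ ℤ^V satisfies 0 ≤ x_v ≤ Q for all v, and that for every subset S ⊆ V inducing a connected subgraph and every sign ε ∈ {+1, −1}, if 0 ≤ x_v + ε·(χ_S)_v ≤ Q for all v then J(x) ≤ J(x + ε χ_S). Then x is globally optimal: J(x) ≤ J(y) for every y ∈ ℤ^V with 0 ≤ y_v ≤ Q for all v. -/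

import Mathlib

open scoped Classical

/-- The undirected support graph of the directed edge set `E`. -/
def undirGraph {V : Type*} (E : Finset (V × V)) : SimpleGraph V where
  Adj u v := u ≠ v ∧ ((u, v) ∈ E ∨ (v, u) ∈ E)
  symm := ⟨by
    intro u v h
    exact ⟨h.1.symm, h.2.elim Or.inr Or.inl⟩⟩
  loopless := ⟨by intro u h; exact h.1 rfl⟩

/-- `S ⊆ V` induces a connected subgraph of the (undirected version of the) graph. -/
def InducesConnected {V : Type*} (E : Finset (V × V)) (S : Set V) : Prop :=
  S.Nonempty ∧ ((undirGraph E).induce S).Connected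

/-- Integer indicator vector of a set of vertices. -/
noncomputable def chiV {V : Type*} (S : Set V) : V → ℤ :=
  S.indicator 1

/-- Integer indicator vector of a set of edges. -/
noncomputable def chiE {V : Type*} {E : Finset (V × V)}
    (T : Set {e : V × V // e ∈ E}) : {e : V × V // e ∈ E} → ℤ :=
  T.indicator 1

/-- Outgoing edges of `S`. -/
def deltaPlus {V : Type*} (E : Finset (V × V)) (S : Set V) :
    Set {e : V × V // e ∈ E} :=
  {e | (e : V × V).1 ∈ S ∧ (e : V × V).2 ∉ S}

/-- Incoming edges of `S`. -/
def deltaMinus {V : Type*} (E : Finset (V × V)) (S : Set V) :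
    Set {e : V × V // e ∈ E} :=
  {e | (e : V × V).1 ∉ S ∧ (e : V × V).2 ∈ S}

/-- The conformal (sign-compatible, coordinatewise) partial order `x ⊑ y`. -/
def Sqle {ι : Type*} (x y : ι → ℤ) : Prop :=
  ∀ i, 0 ≤ x i * y i ∧ |x i| ≤ |y i|

/-- `(x, a)` lies in the integer kernel of `A_TV`. -/
def InKerATV {V : Type*} (E : Finset (V × V)) (x : V → ℤ)
    (a : {e : V × V // e ∈ E} → ℤ) : Prop :=
  ∀ e : {e : V × V // e ∈ E}, x (e : V × V).1 - x (e : V × V).2 = a e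

/-- `(x, a)` is a Graver basis element of `A_TV`: a `⊑`-minimal nonzero
element of the integer kernel. -/
def InGraverATV {V : Type*} (E : Finset (V × V)) (x : V → ℤ)
    (a : {e : V × V // e ∈ E} → ℤ) : Prop :=
  InKerATV E x a ∧ ¬(x = 0 ∧ a = 0) ∧
    ∀ (x' : V → ℤ) (a' : {e : V × V // e ∈ E} → ℤ),
      InKerATV E x' a' → ¬(x' = 0 ∧ a' = 0) → Sqle x' x → Sqle a' a →
        x' = x ∧ a' = a

/-- The objective `J(x) = Σ_v F_v(x_v) + Σ_{(u,v)∈E} G_{uv}(x_u − x_v)`. -/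
noncomputable def JObj {V : Type*} [Fintype V] (E : Finset (V × V))
    (F : V → ℝ → ℝ) (Gf : V × V → ℝ → ℝ) (x : V → ℤ) : ℝ :=
  (∑ v, F v (x v : ℝ)) + ∑ e ∈ E, Gf e ((x e.1 : ℝ) - (x e.2 : ℝ))

lemma convex_exchange (f : ℝ → ℝ) (hf : ConvexOn ℝ Set.univ f) {a b c : ℝ}
    (h : c ^ 2 ≤ c * (b - a)) :
    f (a + c) + f (b - c) ≤ f a + f b := by
  rcases eq_or_ne c 0 with rfl | hc
  · simp
  · have hcsq : (0:ℝ) < c ^ 2 := by positivity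
    have hd : 0 < c * (b - a) := lt_of_lt_of_le hcsq h
    have hba : b - a ≠ 0 := by
      intro h0; rw [h0, mul_zero] at hd; exact lt_irrefl _ hd
    set t := c / (b - a) with ht
    have hct : t * (b - a) = c := div_mul_cancel₀ _ hba
    have ht0 : 0 ≤ t := by
      have : t = c * (b - a) / (b - a) ^ 2 := by
        rw [ht]; field_simp
      rw [this]; positivity
    have ht1 : t ≤ 1 := by
      have h2 : c * (b - a) ≤ (b - a) ^ 2 := by nlinarith [sq_nonneg (b - a - c)]
      have : t = c * (b - a) / (b - a) ^ 2 := by rw [ht]; field_simp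
      rw [this]
      rw [div_le_one (by positivity)]
      exact h2
    have h1 := hf.2 (Set.mem_univ a) (Set.mem_univ b) (by linarith : (0:ℝ) ≤ 1 - t) ht0 (by ring)
    have h2 := hf.2 (Set.mem_univ b) (Set.mem_univ a) (by linarith : (0:ℝ) ≤ 1 - t) ht0 (by ring)
    simp only [smul_eq_mul] at h1 h2
    have e1 : (1 - t) * a + t * b = a + c := by nlinarith [hct]
    have e2 : (1 - t) * b + t * a = b - c := by nlinarith [hct]
    rw [e1] at h1; rw [e2] at h2
    linarith

lemma chiV_of_mem {V : Type*} {S : Set V} {v : V} (h : v ∈ S) : chiV S v = 1 :=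
  Set.indicator_of_mem h 1

lemma chiV_of_not_mem {V : Type*} {S : Set V} {v : V} (h : v ∉ S) : chiV S v = 0 :=
  Set.indicator_of_notMem h 1

/-- If no up- or down-shift on a subset inducing a connected
subgraph improves the objective, then `x` is globally optimal over the box. -/
theorem graver_moves_optimality_certificate
    {V : Type*} [Fintype V] [DecidableEq V] (E : Finset (V × V))
    (hloop : ∀ e ∈ E, e.1 ≠ e.2) (Q : ℕ)
    (F : V → ℝ → ℝ) (Gf : V × V → ℝ → ℝ)
    (hF : ∀ v, ConvexOn ℝ Set.univ (F v))
    (hG : ∀ e ∈ E, ConvexOn ℝ Set.univ (Gf e))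
    (x : V → ℤ) (hx : ∀ v, 0 ≤ x v ∧ x v ≤ (Q : ℤ))
    (hopt : ∀ (S : Set V) (ε : ℤ), (ε = 1 ∨ ε = -1) → InducesConnected E S →
      (∀ v, 0 ≤ x v + ε * chiV S v ∧ x v + ε * chiV S v ≤ (Q : ℤ)) →
      JObj E F Gf x ≤ JObj E F Gf (x + ε • chiV S)) :
    ∀ y : V → ℤ, (∀ v, 0 ≤ y v ∧ y v ≤ (Q : ℤ)) →
      JObj E F Gf x ≤ JObj E F Gf y := by
  classical
  suffices H : ∀ n : ℕ, ∀ y : V → ℤ, (∀ v, 0 ≤ y v ∧ y v ≤ (Q : ℤ)) →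
      (∑ v, (y v - x v).natAbs) = n → JObj E F Gf x ≤ JObj E F Gf y by
    intro y hy; exact H _ y hy rfl
  intro n
  induction n using Nat.strong_induction_on with
  | _ n IH =>
  intro y hy hn
  by_cases hxy : y = x
  · subst hxy; exact le_refl _
  · obtain ⟨v0, hv0⟩ : ∃ v, y v ≠ x v := by
      by_contra h; push_neg at h; exact hxy (funext h)
    set ε : ℤ := if x v0 < y v0 then 1 else -1 with hεdef
    have hε : ε = 1 ∨ ε = -1 := by
      rw [hεdef]; split <;> simp
    set U : Set V := {v | 1 ≤ ε * (y v - x v)} with hUdef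
    have hv0U : v0 ∈ U := by
      simp only [hUdef, Set.mem_setOf_eq]
      rcases lt_or_gt_of_ne hv0 with h | h
      · have : ¬ x v0 < y v0 := by omega
        rw [hεdef, if_neg this]; omega
      · rw [hεdef, if_pos (by omega)]; omega
    set R : V → V → Prop := fun a b => (undirGraph E).Adj a b ∧ b ∈ U with hRdef
    set S : Set V := {v | Relation.ReflTransGen R v0 v} with hSdef
    have hv0S : v0 ∈ S := Relation.ReflTransGen.refl
    have hSU : S ⊆ U := by
      intro v hv
      induction hv with
      | refl => exact hv0U
      | tail _ h2 _ => exact h2.2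
    have hclosure : ∀ u ∈ S, ∀ v, v ∈ U → (undirGraph E).Adj u v → v ∈ S := by
      intro u hu v hv hadj
      exact Relation.ReflTransGen.tail hu ⟨hadj, hv⟩
    -- S induces a connected subgraph
    have hconn : InducesConnected E S := by
      refine ⟨⟨v0, hv0S⟩, ?_⟩
      have key : ∀ b, Relation.ReflTransGen R v0 b →
          ∃ hb : b ∈ S, ((undirGraph E).induce S).Reachable ⟨v0, hv0S⟩ ⟨b, hb⟩ := by
        intro b hb
        induction hb with
        | refl => exact ⟨hv0S, SimpleGraph.Reachable.refl _⟩
        | tail h1 h2 ih =>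
          obtain ⟨hc, hr⟩ := ih
          have hbS : _ ∈ S := Relation.ReflTransGen.tail h1 h2
          refine ⟨hbS, hr.trans (SimpleGraph.Adj.reachable ?_)⟩
          exact h2.1
      rw [SimpleGraph.connected_iff_exists_forall_reachable]
      refine ⟨⟨v0, hv0S⟩, fun w => ?_⟩
      obtain ⟨hw1, hrw⟩ := key w.1 w.2
      have ew : (⟨w.1, hw1⟩ : S) = w := Subtype.ext rfl
      rw [ew] at hrw
      exact hrw
    -- the shifted points
    set xp : V → ℤ := x + ε • chiV S with hxpdef
    have hxp : ∀ v, xp v = x v + ε * chiV S v := by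
      intro v; simp [hxpdef, Pi.smul_apply, smul_eq_mul]
    set y' : V → ℤ := fun v => y v - ε * chiV S v with hy'def
    have hyS : ∀ v ∈ S, 1 ≤ ε * (y v - x v) := fun v hv => hSU hv
    -- box membership for xp
    have hxpbox : ∀ v, 0 ≤ x v + ε * chiV S v ∧ x v + ε * chiV S v ≤ (Q : ℤ) := by
      intro v
      by_cases hv : v ∈ S
      · rw [chiV_of_mem hv]
        have h1 := hyS v hv
        have h2 := hx v; have h3 := hy v
        rcases hε with h | h <;> rw [h] at h1 ⊢ <;> constructor <;> omega
      · rw [chiV_of_not_mem hv]; simpa using hx v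
    -- box membership for y'
    have hy'box : ∀ v, 0 ≤ y' v ∧ y' v ≤ (Q : ℤ) := by
      intro v
      simp only [hy'def]
      by_cases hv : v ∈ S
      · rw [chiV_of_mem hv]
        have h1 := hyS v hv
        have h2 := hx v; have h3 := hy v
        rcases hε with h | h <;> rw [h] at h1 ⊢ <;> constructor <;> omega
      · rw [chiV_of_not_mem hv]; simpa using hy v
    -- strict decrease of the ℓ¹ distance
    have hdec : (∑ v, (y' v - x v).natAbs) < ∑ v, (y v - x v).natAbs := by
      apply Finset.sum_lt_sum
      · intro v _
        simp only [hy'def]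
        by_cases hv : v ∈ S
        · rw [chiV_of_mem hv]
          have h1 := hyS v hv
          rcases hε with h | h <;> rw [h] at h1 ⊢ <;> omega
        · rw [chiV_of_not_mem hv]; omega
      · refine ⟨v0, Finset.mem_univ _, ?_⟩
        simp only [hy'def, chiV_of_mem hv0S]
        have h1 := hyS v0 hv0S
        rcases hε with h | h <;> rw [h] at h1 ⊢ <;> omega
    -- vertex-wise exchange inequality
    have hvert : ∀ v, F v ((xp v : ℝ)) + F v ((y' v : ℝ)) ≤
        F v ((x v : ℝ)) + F v ((y v : ℝ)) := by
      intro v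
      by_cases hv : v ∈ S
      · have h1 := hyS v hv
        have hint : ε ^ 2 ≤ ε * (y v - x v) := by
          rcases hε with h | h <;> rw [h] at h1 ⊢ <;> nlinarith [h1]
        have hre : ((ε : ℝ)) ^ 2 ≤ (ε : ℝ) * (((y v : ℝ)) - (x v : ℝ)) := by
          exact_mod_cast hint
        have := convex_exchange (F v) (hF v) hre
        have exp1 : ((xp v : ℝ)) = (x v : ℝ) + (ε : ℝ) := by
          rw [hxp v, chiV_of_mem hv]; push_cast; ring
        have exp2 : ((y' v : ℝ)) = (y v : ℝ) - (ε : ℝ) := by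
          simp only [hy'def, chiV_of_mem hv]; push_cast; ring
        rw [exp1, exp2]; exact this
      · have e1 : xp v = x v := by rw [hxp v, chiV_of_not_mem hv]; ring
        have e2 : y' v = y v := by simp [hy'def, chiV_of_not_mem hv]
        rw [e1, e2]
    -- edge-wise exchange inequality
    have hedge : ∀ e ∈ E,
        Gf e ((xp e.1 : ℝ) - (xp e.2 : ℝ)) + Gf e ((y' e.1 : ℝ) - (y' e.2 : ℝ)) ≤
        Gf e ((x e.1 : ℝ) - (x e.2 : ℝ)) + Gf e ((y e.1 : ℝ) - (y e.2 : ℝ)) := by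
      intro e he
      have hadj : (undirGraph E).Adj e.1 e.2 :=
        ⟨hloop e he, Or.inl (by rw [Prod.mk.eta]; exact he)⟩
      set c : ℤ := ε * (chiV S e.1 - chiV S e.2) with hcdef
      have hkey : c ^ 2 ≤ c * ((y e.1 - y e.2) - (x e.1 - x e.2)) := by
        by_cases h1 : e.1 ∈ S <;> by_cases h2 : e.2 ∈ S
        · simp [hcdef, chiV_of_mem h1, chiV_of_mem h2]
        · -- e.1 ∈ S, e.2 ∉ S : then e.2 ∉ U
          have hU2 : e.2 ∉ U := fun hU => h2 (hclosure e.1 h1 e.2 hU hadj)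
          have hu : 1 ≤ ε * (y e.1 - x e.1) := hyS e.1 h1
          have hv : ε * (y e.2 - x e.2) ≤ 0 := by
            by_contra hcon; push_neg at hcon
            exact hU2 (by simp only [hUdef, Set.mem_setOf_eq]; omega)
          rw [hcdef, chiV_of_mem h1, chiV_of_not_mem h2]
          rcases hε with h | h <;> rw [h] at hu hv ⊢ <;> nlinarith
        · have hU1 : e.1 ∉ U := fun hU => h1 (hclosure e.2 h2 e.1 hU hadj.symm)
          have hv : 1 ≤ ε * (y e.2 - x e.2) := hyS e.2 h2
          have hu : ε * (y e.1 - x e.1) ≤ 0 := by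
            by_contra hcon; push_neg at hcon
            exact hU1 (by simp only [hUdef, Set.mem_setOf_eq]; omega)
          rw [hcdef, chiV_of_mem h2, chiV_of_not_mem h1]
          rcases hε with h | h <;> rw [h] at hu hv ⊢ <;> nlinarith
        · simp [hcdef, chiV_of_not_mem h1, chiV_of_not_mem h2]
      have hre : ((c : ℝ)) ^ 2 ≤ (c : ℝ) *
          ((((y e.1 : ℝ)) - (y e.2 : ℝ)) - (((x e.1 : ℝ)) - (x e.2 : ℝ))) := by
        exact_mod_cast hkey
      have := convex_exchange (Gf e) (hG e he) hre
      have exp1 : ((xp e.1 : ℝ)) - (xp e.2 : ℝ) =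
          ((x e.1 : ℝ) - (x e.2 : ℝ)) + (c : ℝ) := by
        rw [hxp e.1, hxp e.2, hcdef]; push_cast; ring
      have exp2 : ((y' e.1 : ℝ)) - (y' e.2 : ℝ) =
          ((y e.1 : ℝ) - (y e.2 : ℝ)) - (c : ℝ) := by
        simp only [hy'def, hcdef]; push_cast; ring
      rw [exp1, exp2]; exact this
    -- sum up
    have hJ : JObj E F Gf xp + JObj E F Gf y' ≤ JObj E F Gf x + JObj E F Gf y := by
      unfold JObj
      have hA : (∑ v, F v ((xp v : ℝ))) + (∑ v, F v ((y' v : ℝ))) ≤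
          (∑ v, F v ((x v : ℝ))) + (∑ v, F v ((y v : ℝ))) := by
        rw [← Finset.sum_add_distrib, ← Finset.sum_add_distrib]
        exact Finset.sum_le_sum fun v _ => hvert v
      have hB : (∑ e ∈ E, Gf e ((xp e.1 : ℝ) - (xp e.2 : ℝ))) +
          (∑ e ∈ E, Gf e ((y' e.1 : ℝ) - (y' e.2 : ℝ))) ≤
          (∑ e ∈ E, Gf e ((x e.1 : ℝ) - (x e.2 : ℝ))) +
          (∑ e ∈ E, Gf e ((y e.1 : ℝ) - (y e.2 : ℝ))) := by
        rw [← Finset.sum_add_distrib, ← Finset.sum_add_distrib]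
        exact Finset.sum_le_sum hedge
      linarith
    have hstep : JObj E F Gf x ≤ JObj E F Gf xp := hopt S ε hε hconn hxpbox
    have hIH : JObj E F Gf x ≤ JObj E F Gf y' := by
      refine IH _ ?_ y' hy'box rfl
      omega
    linarith
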